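/- Fix indices i, j with 1 ≤ i ≤ n, 1 ≤ j ≤ q. Assume W, A, S have nonnegative entries and w^t := W_{ij} > 0. Let F(w) = D(W', A, S) where W' agrees with W except that its (i,j) entry is replaced by w, and define G(w, w^t) = F(w^t) + F'(w^t)·(w − w^t) + ((W·A·S·Sᵀ·Aᵀ)_{ij} / w^t)·(w − w^t)², where F' denotes the derivative of F. Then G is an auxiliary function for F: G(w^t, w^t) = F(w^t) and G(w, w^t) ≥ F(w) for all w ∈ ℝ. -/
import Mathlib


open Matrix

/-- The GBR-NMF objective `D(W,A,S) = ‖X − W·A·S‖_F² = Tr((X − WAS)(X − WAS)ᵀ)`. -/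
noncomputable def objD {n p q : ℕ} (X : Matrix (Fin n) (Fin p) ℝ)
    (W : Matrix (Fin n) (Fin q) ℝ) (A : Matrix (Fin q) (Fin q) ℝ)
    (S : Matrix (Fin q) (Fin p) ℝ) : ℝ :=
  Matrix.trace ((X - W * A * S) * (X - W * A * S)ᵀ)

/-- The matrix agreeing with `M` except that its `(i,j)` entry is replaced by `w`. -/
def updEntry {m k : ℕ} (M : Matrix (Fin m) (Fin k) ℝ) (i : Fin m) (j : Fin k) (w : ℝ) :
    Matrix (Fin m) (Fin k) ℝ :=
  fun a b => if a = i ∧ b = j then w else M a b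

lemma trace_sq {n p : ℕ} (Y : Matrix (Fin n) (Fin p) ℝ) :
    Matrix.trace (Y * Yᵀ) = ∑ a, ∑ b, (Y a b)^2 := by
  simp [Matrix.trace, Matrix.mul_apply, Matrix.diag, sq]

lemma upd_eq {m k : ℕ} (M : Matrix (Fin m) (Fin k) ℝ) (i : Fin m) (j : Fin k) (w : ℝ) :
    updEntry M i j w = M + (w - M i j) • Matrix.single i j 1 := by
  ext a b
  by_cases h : a = i ∧ b = j
  · obtain ⟨rfl, rfl⟩ := h
    simp [updEntry, Matrix.single]
  · have h' : ¬ (i = a ∧ j = b) := by tauto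
    simp [updEntry, Matrix.single, h, h']

lemma std_mul_apply {n q p : ℕ} (i : Fin n) (j : Fin q) (N : Matrix (Fin q) (Fin p) ℝ)
    (a : Fin n) (b : Fin p) :
    (Matrix.single i j (1:ℝ) * N) a b = if a = i then N j b else 0 := by
  rw [Matrix.mul_apply]
  by_cases h : a = i
  · subst h
    simp [Matrix.single]
  · have h2 : ∀ k, Matrix.single i j (1:ℝ) a k = 0 := by
      intro k; simp [Matrix.single]; tauto
    simp [h2, h]

/-- (Lemma on `W`-updates.) With `wᵗ = W_{ij} > 0`, `F(w) = D(W', A, S)` (entry `(i,j)` of `W`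
replaced by `w`), the function
`G(w, wᵗ) = F(wᵗ) + F'(wᵗ)(w − wᵗ) + ((W·A·S·Sᵀ·Aᵀ)_{ij}/wᵗ)(w − wᵗ)²`
is an auxiliary function for `F`: `G(wᵗ, wᵗ) = F(wᵗ)` and `G(w, wᵗ) ≥ F(w)` for all `w`. -/
theorem aux_function_for_W_update
    (n p q : ℕ)
    (X : Matrix (Fin n) (Fin p) ℝ) (W : Matrix (Fin n) (Fin q) ℝ)
    (A : Matrix (Fin q) (Fin q) ℝ) (S : Matrix (Fin q) (Fin p) ℝ)
    (hW : ∀ i j, 0 ≤ W i j) (hA : ∀ i j, 0 ≤ A i j) (hS : ∀ i j, 0 ≤ S i j)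
    (i : Fin n) (j : Fin q) (hpos : 0 < W i j) :
    let F : ℝ → ℝ := fun w => objD X (updEntry W i j w) A S
    let G : ℝ → ℝ := fun w =>
      F (W i j) + deriv F (W i j) * (w - W i j)
        + ((W * A * S * Sᵀ * Aᵀ) i j / W i j) * (w - W i j) ^ 2
    G (W i j) = F (W i j) ∧ ∀ w : ℝ, G w ≥ F w := by
  intro F G
  have hG : ∀ w : ℝ, G w = F (W i j) + deriv F (W i j) * (w - W i j)
      + ((W * A * S * Sᵀ * Aᵀ) i j / W i j) * (w - W i j) ^ 2 := fun _ => rfl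
  set t₀ : ℝ := W i j with ht₀
  set N : Matrix (Fin q) (Fin p) ℝ := A * S with hNdef
  have hN : ∀ a b, 0 ≤ N a b := fun a b => by
    rw [hNdef, Matrix.mul_apply]
    exact Finset.sum_nonneg fun k _ => mul_nonneg (hA a k) (hS k b)
  set R : Matrix (Fin n) (Fin p) ℝ := X - W * A * S with hR
  set E : Matrix (Fin n) (Fin p) ℝ := Matrix.single i j (1:ℝ) * N with hE
  -- residual formula
  have hres : ∀ w : ℝ, X - updEntry W i j w * A * S = R - (w - t₀) • E := by
    intro w
    have h1 : updEntry W i j w * A * S = W * A * S + (w - t₀) • E := by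
      rw [upd_eq, ← ht₀, Matrix.add_mul, Matrix.add_mul, Matrix.smul_mul, Matrix.smul_mul,
        hE, hNdef]
      simp only [Matrix.mul_assoc]
    rw [h1, hR]
    abel
  -- F as an explicit quadratic
  set c2 : ℝ := ∑ a, ∑ b, (E a b)^2 with hc2
  set c1 : ℝ := ∑ a, ∑ b, R a b * E a b with hc1
  have hFq : ∀ w : ℝ, F w = F t₀ - 2 * c1 * (w - t₀) + c2 * (w - t₀)^2 := by
    intro w
    have h0 : F t₀ = ∑ a, ∑ b, (R a b)^2 := by
      show objD X (updEntry W i j t₀) A S = _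
      unfold objD
      rw [hres, trace_sq]
      simp
    show objD X (updEntry W i j w) A S = _
    unfold objD
    rw [hres, trace_sq, h0, hc1, hc2]
    simp only [Matrix.sub_apply, Matrix.smul_apply, smul_eq_mul]
    have hexp : ∀ (a : Fin n) (b : Fin p),
        (R a b - (w - t₀) * E a b)^2
          = (R a b)^2 - (2 * (w - t₀)) * (R a b * E a b) + (w - t₀)^2 * (E a b)^2 := by
      intro a b; ring
    simp only [hexp, Finset.sum_add_distrib, Finset.sum_sub_distrib, ← Finset.mul_sum]
    ring
  -- derivative of F at t₀
  have hderiv : deriv F t₀ = -(2 * c1) := by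
    have hFeq : F = fun w => F t₀ - 2 * c1 * (w - t₀) + c2 * (w - t₀)^2 := funext hFq
    have h1 : HasDerivAt (fun w : ℝ => w - t₀) 1 t₀ := (hasDerivAt_id t₀).sub_const t₀
    have h2 : HasDerivAt (fun w : ℝ => F t₀ - 2 * c1 * (w - t₀) + c2 * (w - t₀)^2)
        (0 - 2 * c1 * 1 + c2 * (2 * (t₀ - t₀)^1 * 1)) t₀ := by
      exact ((hasDerivAt_const t₀ (F t₀)).sub ((h1.const_mul (2 * c1)))).add
        ((h1.pow 2).const_mul c2)
    rw [hFeq]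
    have := h2.deriv
    rw [this]
    ring
  -- identification of c2
  have hMeq : A * S * Sᵀ * Aᵀ = N * Nᵀ := by
    rw [hNdef, Matrix.transpose_mul, Matrix.mul_assoc]
  have hc2' : c2 = (N * Nᵀ) j j := by
    rw [hc2]
    have hEsq : ∀ (a : Fin n) (b : Fin p),
        (E a b)^2 = if a = i then (N j b)^2 else 0 := by
      intro a b
      rw [hE, std_mul_apply]
      split <;> simp
    simp only [hEsq]
    rw [Finset.sum_comm]
    simp [Matrix.mul_apply, Matrix.transpose_apply, sq]
  -- key inequality
  have hMnn : ∀ k, 0 ≤ (N * Nᵀ) k j := fun k => by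
    rw [Matrix.mul_apply]
    exact Finset.sum_nonneg fun b _ => mul_nonneg (hN k b) (hN j b)
  have hWM : (W * A * S * Sᵀ * Aᵀ) i j = ∑ k, W i k * (N * Nᵀ) k j := by
    have h3 : W * A * S * Sᵀ * Aᵀ = W * (N * Nᵀ) := by
      rw [hNdef, Matrix.transpose_mul]
      simp only [Matrix.mul_assoc]
    rw [h3, Matrix.mul_apply]
  have hkey : t₀ * (N * Nᵀ) j j ≤ (W * A * S * Sᵀ * Aᵀ) i j := by
    rw [hWM, ht₀]
    exact Finset.single_le_sum (f := fun k => W i k * (N * Nᵀ) k j)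
      (fun k _ => mul_nonneg (hW i k) (hMnn k)) (Finset.mem_univ j)
  have hratio : c2 ≤ (W * A * S * Sᵀ * Aᵀ) i j / t₀ := by
    rw [le_div_iff₀ hpos, hc2']
    linarith
  constructor
  · rw [hG]
    simp
  · intro w
    have hGw : G w = F t₀ - 2 * c1 * (w - t₀)
        + ((W * A * S * Sᵀ * Aᵀ) i j / t₀) * (w - t₀)^2 := by
      rw [hG, hderiv]; ring
    have h4 : c2 * (w - t₀)^2 ≤ ((W * A * S * Sᵀ * Aᵀ) i j / t₀) * (w - t₀)^2 :=
      mul_le_mul_of_nonneg_right hratio (sq_nonneg _)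
    rw [ge_iff_le, hFq w, hGw]
    linarith
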